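/- Let σ be a C² negative function on an open set U ⊂ ℝⁿ satisfying H_σ(ξ,ξ)(x) ≥ −C₁σ²(x)‖ξ‖² − C₂|⟨∇σ(x),ξ⟩|²/‖∇σ(x)‖² on U (with ∇σ ≠ 0 there). Then for suitable constants α, β > 0 (depending on C₁, C₂, sup_U‖x‖² and inf_U‖∇σ‖²), the function σ̃(x) = σ(x) + (α + β‖x‖²)σ²(x) satisfies H_{σ̃}(ξ,ξ)(x) ≥ 0 for all x in a neighborhood W ⊆ U on which 0 ≤ 1 + 2(α+β‖x‖²)σ(x) ≤ 2, and all ξ ∈ ℝⁿ; explicitly one may take β ≥ 2C₁ and α ≥ 7β·sup_U‖x‖² + C₂/inf_U‖∇σ‖². -/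

import Mathlib

open RealInnerProductSpace Metric Bornology

noncomputable abbrev E (n : ℕ) := EuclideanSpace ℝ (Fin n)

set_option maxHeartbeats 1000000

/-- The real Hessian bilinear form `H_f(ξ,ζ)(x)` of a function `f` at `x`. -/
noncomputable def Hess {F : Type*} [NormedAddCommGroup F] [NormedSpace ℝ F]
    (f : F → ℝ) (x ξ ζ : F) : ℝ :=
  fderiv ℝ (fun y => fderiv ℝ f y ζ) x ξ

/-- quadratic negativity implies convexity of the modified function
`σ̃(x) = σ(x) + (α + β‖x‖²)σ²(x)` for `β ≥ 2C₁` and `α ≥ 7β·sup‖x‖² + C₂/inf‖∇σ‖²`,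
at points where `0 ≤ 1 + 2(α+β‖x‖²)σ(x) ≤ 2`. -/
theorem quadratic_negativity_to_convexity
    {n : ℕ} (U : Set (E n)) (hU : IsOpen U) (σ : E n → ℝ) (hσ : ContDiffOn ℝ 2 σ U)
    (hneg : ∀ x ∈ U, σ x < 0) (hgradne : ∀ x ∈ U, gradient σ x ≠ 0)
    (C₁ C₂ : ℝ) (hC₁ : 0 < C₁) (hC₂ : 0 < C₂)
    (hbound : ∀ x ∈ U, ∀ ξ : E n,
      -(C₁ * (σ x) ^ 2 * ‖ξ‖ ^ 2)
        - C₂ * ⟪gradient σ x, ξ⟫ ^ 2 / ‖gradient σ x‖ ^ 2 ≤ Hess σ x ξ ξ)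
    (m₁ m₂ : ℝ) (hm₁ : ∀ x ∈ U, ‖x‖ ^ 2 ≤ m₁)
    (hm₂ : 0 < m₂) (hm₂' : ∀ x ∈ U, m₂ ≤ ‖gradient σ x‖ ^ 2)
    (α β : ℝ) (hα0 : 0 < α) (hβ0 : 0 < β)
    (hβ : 2 * C₁ ≤ β) (hα : 7 * β * m₁ + C₂ / m₂ ≤ α)
    (σt : E n → ℝ) (hσt : ∀ y, σt y = σ y + (α + β * ‖y‖ ^ 2) * (σ y) ^ 2)
    (W : Set (E n)) (hW : W ⊆ U) (hWopen : IsOpen W)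
    (hWcond : ∀ x ∈ W, 0 ≤ 1 + 2 * (α + β * ‖x‖ ^ 2) * σ x ∧
      1 + 2 * (α + β * ‖x‖ ^ 2) * σ x ≤ 2) :
    ∀ x ∈ W, ∀ ξ : E n, 0 ≤ Hess σt x ξ ξ := by
  intro x hxW ξ
  have hxU : x ∈ U := hW hxW
  -- basic differentiability
  have hσ2 : ∀ y ∈ U, ContDiffAt ℝ 2 σ y := fun y hy => (hσ y hy).contDiffAt (hU.mem_nhds hy)
  have hD1 : ∀ y ∈ U, DifferentiableAt ℝ σ y := fun y hy =>
    (hσ2 y hy).differentiableAt (by norm_num)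
  have hDdiff : DifferentiableAt ℝ (fderiv ℝ σ) x :=
    ((hσ2 x hxU).fderiv_right (m := 1) (by norm_num)).differentiableAt one_ne_zero
  have hD2 : HasFDerivAt (fderiv ℝ σ) (fderiv ℝ (fderiv ℝ σ) x) x := hDdiff.hasFDerivAt
  have hd : HasFDerivAt σ (fderiv ℝ σ x) x := (hD1 x hxU).hasFDerivAt
  have hDξ : HasFDerivAt (fun y => fderiv ℝ σ y ξ)
      ((fderiv ℝ σ x).comp (0 : E n →L[ℝ] E n) + (fderiv ℝ (fderiv ℝ σ) x).flip ξ) x :=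
    hD2.clm_apply (hasFDerivAt_const ξ x)
  -- the Hessian of σ is the second derivative
  have hHσ : Hess σ x ξ ξ = fderiv ℝ (fderiv ℝ σ) x ξ ξ := by
    rw [Hess, hDξ.fderiv]; simp
  -- gradient pairing
  have hgrad : ∀ ζ : E n, ⟪gradient σ x, ζ⟫ = fderiv ℝ σ x ζ := fun ζ => by
    rw [gradient]; exact InnerProductSpace.toDual_symm_apply
  -- derivative of σt on U
  have key : ∀ y ∈ U, HasFDerivAt σt
      (fderiv ℝ σ y +
        ((α + β * ‖y‖ ^ 2) • (σ y • fderiv ℝ σ y + σ y • fderiv ℝ σ y) +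
          (σ y * σ y) • (β • ((2:ℕ) • innerSL ℝ y)))) y := by
    intro y hy
    have hdy : HasFDerivAt σ (fderiv ℝ σ y) y := (hD1 y hy).hasFDerivAt
    have hn : HasFDerivAt (fun z : E n => ‖z‖ ^ 2) ((2:ℕ) • innerSL ℝ y) y :=
      (hasStrictFDerivAt_norm_sq y).hasFDerivAt
    have h1 : HasFDerivAt (fun z : E n => α + β * ‖z‖ ^ 2) (β • ((2:ℕ) • innerSL ℝ y)) y :=
      (hn.const_mul β).const_add α
    have h4 := hdy.add (h1.mul (hdy.mul hdy))
    have hfe : σt = fun z => σ z + (α + β * ‖z‖ ^ 2) * (σ z * σ z) := by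
      funext z; rw [hσt]; ring
    rw [hfe]
    exact h4
  -- the Hessian of σt in explicit form
  have hform : Hess σt x ξ ξ =
      (1 + 2 * (α + β * ‖x‖ ^ 2) * σ x) * (fderiv ℝ (fderiv ℝ σ) x ξ ξ)
      + 2 * (α + β * ‖x‖ ^ 2) * (fderiv ℝ σ x ξ) ^ 2
      + 8 * β * σ x * ⟪x, ξ⟫ * (fderiv ℝ σ x ξ)
      + 2 * β * (σ x) ^ 2 * ‖ξ‖ ^ 2 := by
    set G : E n → ℝ := fun y =>
      (1 + 2 * ((α + β * ‖y‖ ^ 2) * σ y)) * (fderiv ℝ σ y ξ) + 2 * β * (σ y * σ y) * ⟪y, ξ⟫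
      with hG
    have heq : (fun y => fderiv ℝ σt y ξ) =ᶠ[nhds x] G := by
      filter_upwards [hU.mem_nhds hxU] with y hy
      rw [(key y hy).fderiv, hG]
      simp [ContinuousLinearMap.add_apply, ContinuousLinearMap.smul_apply, innerSL_apply_apply]
      ring
    have hHt : Hess σt x ξ ξ = fderiv ℝ G x ξ := by
      rw [Hess, heq.fderiv_eq]
    have hn : HasFDerivAt (fun z : E n => ‖z‖ ^ 2) ((2:ℕ) • innerSL ℝ x) x :=
      (hasStrictFDerivAt_norm_sq x).hasFDerivAt
    have h1 : HasFDerivAt (fun z : E n => α + β * ‖z‖ ^ 2) (β • ((2:ℕ) • innerSL ℝ x)) x :=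
      (hn.const_mul β).const_add α
    have hinner : HasFDerivAt (fun y : E n => ⟪y, ξ⟫) (innerSL ℝ ξ) x := by
      have h0 : (fun y : E n => ⟪y, ξ⟫) = ⇑(innerSL ℝ ξ) := by
        funext y; simp only [innerSL_apply_apply]; exact real_inner_comm ξ y
      rw [h0]; exact (innerSL ℝ ξ).hasFDerivAt
    have hbig := ((((h1.mul hd).const_mul 2).const_add 1).mul hDξ).add
      (((hd.mul hd).const_mul (2 * β)).mul hinner)
    have hGd : HasFDerivAt G _ x := hbig
    rw [hHt, hGd.fderiv]
    simp only [ContinuousLinearMap.add_apply, ContinuousLinearMap.smul_apply,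
      ContinuousLinearMap.comp_apply, ContinuousLinearMap.zero_apply,
      ContinuousLinearMap.flip_apply, smul_eq_mul, innerSL_apply_apply,
      real_inner_self_eq_norm_sq, real_inner_comm x ξ, map_zero, Pi.mul_apply]
    ring
  -- now the scalar inequality
  obtain ⟨ht0, ht2⟩ := hWcond x hxW
  have hb := hbound x hxU ξ
  rw [hHσ, hgrad ξ] at hb
  set s := σ x
  set d := fderiv ℝ σ x ξ
  set h := fderiv ℝ (fderiv ℝ σ) x ξ ξ
  set p : ℝ := ⟪x, ξ⟫
  set nx := ‖x‖ ^ 2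
  set nξ := ‖ξ‖ ^ 2
  set Gn := ‖gradient σ x‖ ^ 2
  have hG : m₂ ≤ Gn := hm₂' x hxU
  have hG0 : 0 < Gn := lt_of_lt_of_le hm₂ hG
  have hnx : (0:ℝ) ≤ nx := by positivity
  have hnξ : (0:ℝ) ≤ nξ := by positivity
  have hm₁' : nx ≤ m₁ := hm₁ x hxU
  have hp : p ^ 2 ≤ nx * nξ := by
    have := abs_real_inner_le_norm x ξ
    calc p ^ 2 = |p| ^ 2 := (sq_abs p).symm
      _ ≤ (‖x‖ * ‖ξ‖) ^ 2 := by
          apply pow_le_pow_left₀ (abs_nonneg p) this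
      _ = nx * nξ := by rw [mul_pow]
  rw [hform]
  have hq : C₂ * d ^ 2 / Gn ≤ C₂ * d ^ 2 / m₂ :=
    div_le_div_of_nonneg_left (by positivity) hm₂ hG
  have hth : -(2 * (C₁ * s ^ 2 * nξ)) - 2 * (C₂ * d ^ 2 / m₂)
      ≤ (1 + 2 * (α + β * nx) * s) * h := by
    rcases le_or_gt 0 h with h0 | h0
    · have h1' : 0 ≤ (1 + 2 * (α + β * nx) * s) * h := mul_nonneg ht0 h0
      have h2' : 0 ≤ C₁ * s ^ 2 * nξ := by positivity
      have h3' : 0 ≤ C₂ * d ^ 2 / m₂ := by positivity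
      linarith
    · nlinarith [mul_le_mul_of_nonpos_right ht2 h0.le]
  have hA : 8 * β * nx + C₂ / m₂ ≤ α + β * nx := by nlinarith
  have h2A : 16 * β * nx * d ^ 2 + 2 * (C₂ / m₂) * d ^ 2 ≤ 2 * (α + β * nx) * d ^ 2 := by
    nlinarith [sq_nonneg d]
  have hcross : 0 ≤ β * s ^ 2 * nξ + 16 * β * nx * d ^ 2 + 8 * β * s * p * d := by
    have h1 : 16 * β ^ 2 * s ^ 2 * d ^ 2 * p ^ 2 ≤ 16 * β ^ 2 * s ^ 2 * d ^ 2 * (nx * nξ) :=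
      mul_le_mul_of_nonneg_left hp (by positivity)
    have ha : 0 ≤ β * s ^ 2 * nξ := by positivity
    have hb' : 0 ≤ 16 * β * nx * d ^ 2 := by positivity
    nlinarith [sq_nonneg (β * s ^ 2 * nξ - 16 * β * nx * d ^ 2), h1, ha, hb',
      sq_nonneg (β * s ^ 2 * nξ + 16 * β * nx * d ^ 2 + 8 * β * s * p * d)]
  have hdiv : 2 * (C₂ / m₂) * d ^ 2 = 2 * (C₂ * d ^ 2 / m₂) := by ring
  have hprod : 0 ≤ (β - 2 * C₁) * (s ^ 2 * nξ) :=
    mul_nonneg (by linarith) (by positivity)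
  nlinarith [hth, h2A, hcross, hdiv, hprod]
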